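/- arXiv:2401.00666 — 5 statements merged into one kernel-verified Lean document; each statement's English description precedes it below -/
import Mathlib

section
/- For finite graphs G and H, (G □ H)_δ = G_δ □ H_δ if and only if for all vertices u = (u₁,u₂) and v = (v₁,v₂) of G □ H with u₁ ≠ v₁ and u₂ ≠ v₂, the degrees of u and v in G □ H are distinct. -/
open scoped Classical
open SimpleGraph

/-- The δ-complement of a graph: `u v` are adjacent iff they are distinct and
either they have equal degrees and are non-adjacent in `G`, or they have
different degrees and are adjacent in `G`. -/
def deltaComp {V : Type*} [Fintype V] (G : SimpleGraph V) : SimpleGraph V where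
  Adj u v := u ≠ v ∧ ((G.degree u = G.degree v ∧ ¬ G.Adj u v) ∨
    (G.degree u ≠ G.degree v ∧ G.Adj u v))
  symm := ⟨by
    intro u v h
    refine ⟨h.1.symm, ?_⟩
    rcases h.2 with ⟨hd, ha⟩ | ⟨hd, ha⟩
    · exact Or.inl ⟨hd.symm, fun hh => ha hh.symm⟩
    · exact Or.inr ⟨fun hh => hd hh.symm, ha.symm⟩⟩
  loopless := ⟨fun v h => h.1 rfl⟩

/-- The δ-chromatic number: chromatic number of the δ-complement. -/
noncomputable def deltaChrom {V : Type*} [Fintype V] (G : SimpleGraph V) : ℕ∞ :=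
  (deltaComp G).chromaticNumber

lemma deg_irrel {V : Type*} (G : SimpleGraph V) (v : V)
    {i1 i2 : Fintype (G.neighborSet v)} :
    @SimpleGraph.degree _ G v i1 = @SimpleGraph.degree _ G v i2 := by
  congr!

lemma deltaComp_adj {V : Type*} [Fintype V] (G : SimpleGraph V) (u v : V) :
    (deltaComp G).Adj u v ↔ u ≠ v ∧ ((G.degree u = G.degree v ∧ ¬ G.Adj u v) ∨
      (G.degree u ≠ G.degree v ∧ G.Adj u v)) := Iff.rfl

/-- `(G □ H)_δ = G_δ □ H_δ` iff any two vertices differing in both coordinates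
have distinct degrees in `G □ H`. -/
theorem deltaComp_boxProd_eq_iff {V W : Type*} [Fintype V] [Fintype W]
    (G : SimpleGraph V) (H : SimpleGraph W) :
    deltaComp (G □ H) = (deltaComp G □ deltaComp H) ↔
      ∀ u v : V × W, u.1 ≠ v.1 → u.2 ≠ v.2 →
        (G □ H).degree u ≠ (G □ H).degree v := by
  have hdeg : ∀ (x : V × W) (i : Fintype ((G □ H).neighborSet x)),
      @SimpleGraph.degree _ (G □ H) x i = G.degree x.1 + H.degree x.2 :=
    fun x i => (deg_irrel _ _).trans (degree_boxProd x)
  constructor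
  · intro heq u v h1 h2 hdegeq
    have hne : u ≠ v := fun h => h1 (congrArg Prod.fst h)
    have hadj : ¬ (G □ H).Adj u v := by
      rw [boxProd_adj]; rintro (⟨_, h⟩ | ⟨_, h⟩); exacts [h2 h, h1 h]
    have : (deltaComp (G □ H)).Adj u v := by
      rw [deltaComp_adj]
      refine ⟨hne, Or.inl ⟨?_, hadj⟩⟩
      rw [hdeg, hdeg]
      exact (hdeg u _).symm.trans (hdegeq.trans (hdeg v _))
    rw [heq, boxProd_adj] at this
    rcases this with ⟨_, h⟩ | ⟨_, h⟩; exacts [h2 h, h1 h]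
  · intro hcond
    ext ⟨u1, u2⟩ ⟨v1, v2⟩
    rw [boxProd_adj, deltaComp_adj, deltaComp_adj, deltaComp_adj, boxProd_adj]
    simp only [hdeg, ne_eq, Prod.mk.injEq, not_and]
    by_cases h1 : u1 = v1
    · subst h1
      by_cases h2 : u2 = v2
      · subst h2
        simp [G.irrefl, H.irrefl]
      · have hc : G.degree u1 + H.degree u2 = G.degree u1 + H.degree v2 ↔
            H.degree u2 = H.degree v2 := by omega
        simp only [hc]
        simp [h2, G.irrefl]
    · by_cases h2 : u2 = v2
      · subst h2
        have hc : G.degree u1 + H.degree u2 = G.degree v1 + H.degree u2 ↔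
            G.degree u1 = G.degree v1 := by omega
        simp only [hc]
        simp [h1, H.irrefl]
      · have hd := hcond (u1, u2) (v1, v2) h1 h2
        rw [hdeg, hdeg] at hd
        simp [h1, h2]
        tauto
end

section
/- For finite nonempty graphs G and H, (G □ H)_δ = G_δ □ H_δ if and only if G = K₁ or H = K₁ (i.e., at least one of G, H has exactly one vertex). -/
open scoped Classical
open SimpleGraph

lemma degree_inst {V : Type*} (G : SimpleGraph V) (v : V)
    (i j : Fintype (G.neighborSet v)) :
    @SimpleGraph.degree _ G v i = @SimpleGraph.degree _ G v j := by
  cases Subsingleton.elim i j; rfl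

lemma boxDeg {α β : Type*} (G : SimpleGraph α) (H : SimpleGraph β) (x : α × β)
    {i : Fintype ((G □ H).neighborSet x)} {i1 : Fintype (G.neighborSet x.1)}
    {i2 : Fintype (H.neighborSet x.2)} :
    @SimpleGraph.degree _ (G □ H) x i =
      @SimpleGraph.degree _ G x.1 i1 + @SimpleGraph.degree _ H x.2 i2 := by
  have h := SimpleGraph.degree_boxProd (G := G) (H := H) x
  rw [degree_inst (G □ H) x _ i, degree_inst G x.1 _ i1, degree_inst H x.2 _ i2] at h
  exact h

lemma exists_ne_degree_eq {V : Type*} [Fintype V] (G : SimpleGraph V)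
    (h : 2 ≤ Fintype.card V) : ∃ u v : V, u ≠ v ∧ G.degree u = G.degree v := by
  by_contra hc
  push_neg at hc
  have hinj : Function.Injective (fun v => G.degree v) := by
    intro u v huv
    by_contra hne
    exact hc u v hne huv
  have hlt : ∀ v : V, G.degree v < Fintype.card V := fun v => G.degree_lt_card_verts v
  set f : V → Fin (Fintype.card V) := fun v => ⟨G.degree v, hlt v⟩ with hf
  have hfinj : Function.Injective f := by
    intro u v huv
    apply hinj
    simpa [hf, Fin.ext_iff] using huv
  have hsurj : Function.Surjective f :=
    ((Fintype.bijective_iff_injective_and_card f).2 ⟨hfinj, by simp⟩).2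
  obtain ⟨u, hu⟩ := hsurj ⟨0, by omega⟩
  obtain ⟨w, hw⟩ := hsurj ⟨Fintype.card V - 1, by omega⟩
  have hdu : G.degree u = 0 := congrArg Fin.val hu
  have hdw : G.degree w = Fintype.card V - 1 := congrArg Fin.val hw
  have huw : u ≠ w := by intro e; rw [e, hdw] at hdu; omega
  have hsub : G.neighborFinset w ⊆ Finset.univ.erase w := by
    intro x hx
    rw [SimpleGraph.mem_neighborFinset] at hx
    exact Finset.mem_erase.2 ⟨(G.ne_of_adj hx).symm, Finset.mem_univ x⟩
  have heq : G.neighborFinset w = Finset.univ.erase w := by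
    apply Finset.eq_of_subset_of_card_le hsub
    rw [Finset.card_erase_of_mem (Finset.mem_univ w), Finset.card_univ]
    rw [← SimpleGraph.card_neighborFinset_eq_degree] at hdw
    omega
  have : G.Adj w u := by
    rw [← SimpleGraph.mem_neighborFinset, heq]
    exact Finset.mem_erase.2 ⟨huw, Finset.mem_univ u⟩
  have := G.degree_pos_iff_exists_adj u |>.2 ⟨w, this.symm⟩
  omega

lemma degree_eq_zero_of_subsingleton {V : Type*} [Fintype V] [Subsingleton V]
    (G : SimpleGraph V) (a : V) : G.degree a = 0 := by
  by_contra h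
  obtain ⟨w, hw⟩ := (G.degree_pos_iff_exists_adj a).1 (Nat.pos_of_ne_zero h)
  exact G.irrefl (Subsingleton.elim a w ▸ hw)

lemma aux_left {V W : Type*} [Fintype V] [Fintype W] [Subsingleton V]
    (G : SimpleGraph V) (H : SimpleGraph W) :
    deltaComp (G □ H) = deltaComp G □ deltaComp H := by
  ext ⟨a, b⟩ ⟨a', b'⟩
  obtain rfl : a = a' := Subsingleton.elim a a'
  have hG : ∀ x : V, G.degree x = 0 := degree_eq_zero_of_subsingleton G
  have hdeg : ∀ (x : V × W) (i : Fintype ((G □ H).neighborSet x)),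
      @SimpleGraph.degree _ (G □ H) x i = H.degree x.2 := by
    intro x i
    rw [boxDeg (i := i), hG, zero_add]
  simp only [deltaComp_adj, SimpleGraph.boxProd_adj, hdeg, ne_eq, Prod.mk.injEq, true_and,
    SimpleGraph.irrefl, false_and, false_or, and_true, not_or]

lemma aux_right {V W : Type*} [Fintype V] [Fintype W] [Subsingleton W]
    (G : SimpleGraph V) (H : SimpleGraph W) :
    deltaComp (G □ H) = deltaComp G □ deltaComp H := by
  ext ⟨a, b⟩ ⟨a', b'⟩
  obtain rfl : b = b' := Subsingleton.elim b b'
  have hH : ∀ x : W, H.degree x = 0 := degree_eq_zero_of_subsingleton H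
  have hdeg : ∀ (x : V × W) (i : Fintype ((G □ H).neighborSet x)),
      @SimpleGraph.degree _ (G □ H) x i = G.degree x.1 := by
    intro x i
    rw [boxDeg (i := i), hH, add_zero]
  simp only [deltaComp_adj, SimpleGraph.boxProd_adj, hdeg, ne_eq, Prod.mk.injEq, and_true,
    SimpleGraph.irrefl, false_and, or_false]

/-- For nonempty graphs, `(G □ H)_δ = G_δ □ H_δ` iff `G = K₁` or `H = K₁`. -/
theorem deltaComp_boxProd_eq_iff_card_one {V W : Type*} [Fintype V] [Fintype W]
    [Nonempty V] [Nonempty W] (G : SimpleGraph V) (H : SimpleGraph W) :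
    deltaComp (G □ H) = (deltaComp G).boxProd (deltaComp H) ↔
      Fintype.card V = 1 ∨ Fintype.card W = 1 := by
  constructor
  · intro heq
    by_contra hc
    push_neg at hc
    have hV : 2 ≤ Fintype.card V := by
      have := Fintype.card_pos (α := V); omega
    have hW : 2 ≤ Fintype.card W := by
      have := Fintype.card_pos (α := W); omega
    obtain ⟨a, a', haa, hda⟩ := exists_ne_degree_eq G hV
    obtain ⟨b, b', hbb, hdb⟩ := exists_ne_degree_eq H hW
    have hL : (deltaComp (G □ H)).Adj (a, b) (a', b') := by
      refine ⟨by simp [haa], Or.inl ⟨?_, ?_⟩⟩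
      · rw [boxDeg (G := G) (H := H) (a, b), boxDeg (G := G) (H := H) (a', b'), hda, hdb]
      · rintro (⟨_, h⟩ | ⟨_, h⟩)
        · exact hbb h
        · exact haa h
    rw [heq] at hL
    rcases hL with ⟨_, h⟩ | ⟨_, h⟩
    · exact hbb h
    · exact haa h
  · rintro (h | h)
    · have : Subsingleton V := by
        rw [← Fintype.card_le_one_iff_subsingleton]; omega
      exact aux_left G H
    · have : Subsingleton W := by
        rw [← Fintype.card_le_one_iff_subsingleton]; omega
      exact aux_right G H
end

section
/- For n ≥ 5, the δ-chromatic number of C_n □ P₃ equals 2⌈n/2⌉. -/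
open scoped Classical
open SimpleGraph

/- ### Auxiliary lemmas -/

lemma myFinSubValOne {n : ℕ} (hn : 2 ≤ n) (a b : Fin n) :
    (a - b).val = 1 ↔ (a.val = b.val + 1 ∨ (a.val = 0 ∧ b.val + 1 = n)) := by
  have ha := a.isLt; have hb := b.isLt
  rw [Fin.sub_def]
  simp only
  rcases Nat.lt_or_ge ((n - b.val) + a.val) n with h | h
  · rw [Nat.mod_eq_of_lt h]; omega
  · have h2 : (n - b.val) + a.val - n < n := by omega
    rw [Nat.mod_eq_sub_mod h, Nat.mod_eq_of_lt h2]; omega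

lemma myCycleAdjIff {n : ℕ} (hn : 5 ≤ n) (a b : Fin n) :
    (cycleGraph n).Adj a b ↔
      (a.val + 1 = b.val ∨ b.val + 1 = a.val ∨ (a.val = 0 ∧ b.val + 1 = n) ∨
        (b.val = 0 ∧ a.val + 1 = n)) := by
  rw [cycleGraph_adj', myFinSubValOne (by omega), myFinSubValOne (by omega)]
  omega

lemma myCycleNoTriangle {n : ℕ} (hn : 5 ≤ n) {a b c : Fin n}
    (hab : (cycleGraph n).Adj a b) (hac : (cycleGraph n).Adj a c)
    (hbc : (cycleGraph n).Adj b c) : False := by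
  rw [myCycleAdjIff hn] at hab hac hbc
  have := a.isLt; have := b.isLt; have := c.isLt
  omega

lemma myCycleAdjOfHalfEq {n : ℕ} (hn : 5 ≤ n) {a b : Fin n} (hne : a ≠ b)
    (h : a.val / 2 = b.val / 2) : (cycleGraph n).Adj a b := by
  rw [myCycleAdjIff hn]
  have := a.isLt; have := b.isLt
  have hv : a.val ≠ b.val := fun h' => hne (Fin.ext h')
  omega

lemma myDegCongr {V : Type*} (G : SimpleGraph V) (v : V)
    (i1 i2 : Fintype (G.neighborSet v)) :
    @SimpleGraph.degree V G v i1 = @SimpleGraph.degree V G v i2 :=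
  congrArg (fun i => @SimpleGraph.degree V G v i) (Subsingleton.elim i1 i2)

lemma myPath3NeighborFinset (j : Fin 3) (inst : Fintype ((pathGraph 3).neighborSet j)) :
    @SimpleGraph.neighborFinset _ (pathGraph 3) j inst =
      if (j : ℕ) = 1 then {0, 2} else {(1 : Fin 3)} := by
  ext a
  rw [SimpleGraph.mem_neighborFinset, pathGraph_adj]
  fin_cases j <;> fin_cases a <;> simp

lemma myPath3Degree (j : Fin 3) (inst : Fintype ((pathGraph 3).neighborSet j)) :
    @SimpleGraph.degree _ (pathGraph 3) j inst = if (j : ℕ) = 1 then 2 else 1 := by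
  have h : @SimpleGraph.degree _ (pathGraph 3) j inst =
      (@SimpleGraph.neighborFinset _ (pathGraph 3) j inst).card := rfl
  rw [h, myPath3NeighborFinset]
  fin_cases j <;> simp

lemma myCycleDegree {n : ℕ} (hn : 5 ≤ n) (a : Fin n)
    (inst : Fintype ((cycleGraph n).neighborSet a)) :
    @SimpleGraph.degree _ (cycleGraph n) a inst = 2 := by
  obtain ⟨k, rfl⟩ : ∃ k, n = k + 3 := ⟨n - 3, by omega⟩
  rw [myDegCongr _ _ inst (SimpleGraph.neighborSetFintype _ _)]
  exact cycleGraph_degree_three_le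

lemma myBoxDegree {n : ℕ} (hn : 5 ≤ n) (v : Fin n × Fin 3)
    (inst : Fintype ((cycleGraph n □ pathGraph 3).neighborSet v)) :
    @SimpleGraph.degree _ (cycleGraph n □ pathGraph 3) v inst =
      if (v.2 : ℕ) = 1 then 4 else 3 := by
  rw [SimpleGraph.degree_boxProd, myCycleDegree hn, myPath3Degree]
  by_cases h : (v.2 : ℕ) = 1 <;> simp [h]

lemma myDeltaAdj {n : ℕ} (hn : 5 ≤ n) (u v : Fin n × Fin 3) :
    (deltaComp (cycleGraph n □ pathGraph 3)).Adj u v ↔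
      u ≠ v ∧ ((((u.2 : ℕ) = 1 ↔ (v.2 : ℕ) = 1) ∧ ¬ (cycleGraph n □ pathGraph 3).Adj u v) ∨
        (¬((u.2 : ℕ) = 1 ↔ (v.2 : ℕ) = 1) ∧ (cycleGraph n □ pathGraph 3).Adj u v)) := by
  show (u ≠ v ∧ _) ↔ _
  rw [myBoxDegree hn u, myBoxDegree hn v]
  have e : ((if (u.2 : ℕ) = 1 then (4:ℕ) else 3) = (if (v.2 : ℕ) = 1 then 4 else 3)) ↔
      ((u.2 : ℕ) = 1 ↔ (v.2 : ℕ) = 1) := by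
    by_cases h1 : (u.2 : ℕ) = 1 <;> by_cases h2 : (v.2 : ℕ) = 1 <;> simp [h1, h2]
  simp only [Ne, e]

lemma myModSuccInj {m a b : ℕ} (ha : a < m) (hb : b < m)
    (h : (a + 1) % m = (b + 1) % m) : a = b := by
  rcases Nat.lt_or_ge (a + 1) m with h1 | h1 <;> rcases Nat.lt_or_ge (b + 1) m with h2 | h2
  · rw [Nat.mod_eq_of_lt h1, Nat.mod_eq_of_lt h2] at h; omega
  · have hb1 : b + 1 = m := by omega
    rw [Nat.mod_eq_of_lt h1, hb1, Nat.mod_self] at h; omega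
  · have ha1 : a + 1 = m := by omega
    rw [ha1, Nat.mod_self, Nat.mod_eq_of_lt h2] at h; omega
  · omega

lemma myModSuccNe {m a : ℕ} (hm : 2 ≤ m) (ha : a < m) : (a + 1) % m ≠ a := by
  rcases Nat.lt_or_ge (a + 1) m with h1 | h1
  · rw [Nat.mod_eq_of_lt h1]; omega
  · have ha1 : a + 1 = m := by omega
    rw [ha1, Nat.mod_self]; omega

/-- Upper bound: an explicit coloring. -/
lemma myColorable {n : ℕ} (hn : 5 ≤ n) :
    (deltaComp (cycleGraph n □ pathGraph 3)).Colorable (2 * ((n + 1) / 2)) := by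
  set m := (n + 1) / 2 with hm
  have hm2 : 3 ≤ m := by omega
  have hmod : ∀ a : ℕ, (a + 1) % m < m := fun a => Nat.mod_lt _ (by omega)
  have hin : ∀ i : Fin n, i.val / 2 < m := fun i => by have := i.isLt; omega
  refine ⟨SimpleGraph.Coloring.mk
    (fun v => (⟨if (v.2 : ℕ) = 0 then v.1.val / 2
      else if (v.2 : ℕ) = 2 then m + v.1.val / 2
      else (v.1.val / 2 + 1) % m, by
        have h1 := hin v.1
        have h2 := hmod (v.1.val / 2)
        split_ifs <;> omega⟩ : Fin (2 * m))) ?_⟩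
  intro u v hadj heq
  rw [Fin.mk.injEq] at heq
  rw [myDeltaAdj hn] at hadj
  obtain ⟨hne, hcase⟩ := hadj
  obtain ⟨i, ju⟩ := u
  obtain ⟨i', jv⟩ := v
  dsimp only at heq hcase hne
  have hju := ju.isLt; have hjv := jv.isLt
  have hiu := hin i; have hiv := hin i'
  rcases hcase with ⟨hiff, hna⟩ | ⟨hiff, ha⟩
  · -- same degree class, non-adjacent
    have key : i.val / 2 = i'.val / 2 ∧ ju = jv → False := by
      rintro ⟨hhalf, hj⟩
      subst hj
      exact hna (SimpleGraph.boxProd_adj.mpr (Or.inl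
        ⟨myCycleAdjOfHalfEq hn (fun h => hne (congrArg (fun x => (x, ju)) h)) hhalf, rfl⟩))
    split_ifs at heq <;>
      refine key ⟨?_, Fin.ext ?_⟩ <;>
      first
        | omega
        | exact myModSuccInj hiu hiv heq
        | exact absurd (hiff.mpr (by omega)) (by omega)
        | exact absurd (hiff.mp (by omega)) (by omega)
  · -- different degree class, adjacent
    have hjj : (ju : ℕ) ≠ (jv : ℕ) := fun h => hiff (by rw [h])
    have hi : i = i' := by
      rcases SimpleGraph.boxProd_adj.mp ha with ⟨_, hj⟩ | ⟨_, hi⟩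
      · exact absurd (congrArg Fin.val hj) hjj
      · exact hi
    subst hi
    have hq : ∃ q, (i.val / 2 + 1) % m = q := ⟨_, rfl⟩
    obtain ⟨q, hq⟩ := hq
    rw [hq] at heq
    have hqlt : q < m := hq ▸ hmod _
    split_ifs at heq <;>
      first
        | omega
        | exact hiff ⟨fun _ => by omega, fun _ => by omega⟩
        | exact myModSuccNe (by omega) hiu (hq.trans heq.symm)
        | exact myModSuccNe (by omega) hiu (hq.trans heq)

/-- Lower bound. -/
lemma myLower {n : ℕ} (hn : 5 ≤ n) (t : ℕ)
    (ht : (deltaComp (cycleGraph n □ pathGraph 3)).Colorable t) :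
    2 * ((n + 1) / 2) ≤ t := by
  obtain ⟨C⟩ := ht
  -- same-layer same-color vertices are adjacent in the cycle
  have pair : ∀ (j : Fin 3) (x y : Fin n), x ≠ y → C (x, j) = C (y, j) →
      (cycleGraph n).Adj x y := by
    intro j x y hxy hCe
    by_contra hnadj
    refine C.valid ?_ hCe
    rw [myDeltaAdj hn]
    refine ⟨fun h => hxy (congrArg Prod.fst h), Or.inl ⟨Iff.rfl, ?_⟩⟩
    rw [SimpleGraph.boxProd_adj]
    rintro (⟨h, _⟩ | ⟨h, _⟩)
    · exact hnadj h
    · exact (pathGraph 3).loopless.irrefl j h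
  -- fibers of the coloring restricted to a layer have at most 2 elements
  have fiber : ∀ (j : Fin 3) (c : Fin t),
      (Finset.univ.filter (fun i : Fin n => C (i, j) = c)).card ≤ 2 := by
    intro j c
    by_contra hc
    push_neg at hc
    rw [Finset.two_lt_card] at hc
    obtain ⟨a, ha, b, hb, d, hd, hab, had, hbd⟩ := hc
    simp only [Finset.mem_filter, Finset.mem_univ, true_and] at ha hb hd
    exact myCycleNoTriangle hn (pair j a b hab (ha.trans hb.symm))
      (pair j a d had (ha.trans hd.symm)) (pair j b d hbd (hb.trans hd.symm))
  have himg : ∀ j : Fin 3,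
      (n : ℕ) ≤ 2 * (Finset.univ.image (fun i : Fin n => C (i, j))).card := by
    intro j
    have h := Finset.card_le_mul_card_image (f := fun i : Fin n => C (i, j))
      Finset.univ 2 (fun b _ => fiber j b)
    simpa using h
  -- layers 0 and 2 use disjoint color sets
  have hadj02 : ∀ i i' : Fin n,
      (deltaComp (cycleGraph n □ pathGraph 3)).Adj (i, (0 : Fin 3)) (i', (2 : Fin 3)) := by
    intro i i'
    rw [myDeltaAdj hn]
    refine ⟨?_, Or.inl ⟨?_, ?_⟩⟩
    · intro h
      have h2 : (0 : Fin 3) = 2 := congrArg Prod.snd h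
      exact absurd h2 (by decide)
    · show ((0 : Fin 3) : ℕ) = 1 ↔ ((2 : Fin 3) : ℕ) = 1
      decide
    · rw [SimpleGraph.boxProd_adj]
      rintro (⟨_, h⟩ | ⟨h, _⟩)
      · have h2 : (0 : Fin 3) = 2 := h
        exact absurd h2 (by decide)
      · have h2 : (pathGraph 3).Adj 0 2 := h
        rw [pathGraph_adj] at h2
        exact absurd h2 (by decide)
  have hdisj : Disjoint (Finset.univ.image (fun i : Fin n => C (i, (0 : Fin 3))))
      (Finset.univ.image (fun i : Fin n => C (i, (2 : Fin 3)))) := by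
    rw [Finset.disjoint_left]
    intro c h0 h2
    simp only [Finset.mem_image, Finset.mem_univ, true_and] at h0 h2
    obtain ⟨a, ha⟩ := h0
    obtain ⟨b, hb⟩ := h2
    exact C.valid (hadj02 a b) (ha.trans hb.symm)
  have hunion := Finset.card_union_of_disjoint hdisj
  have hle : ((Finset.univ.image (fun i : Fin n => C (i, (0 : Fin 3)))) ∪
      (Finset.univ.image (fun i : Fin n => C (i, (2 : Fin 3))))).card ≤ t := by
    refine le_trans (Finset.card_le_univ _) ?_
    simp
  have h0 := himg 0
  have h2 := himg 2
  omega

/-- For `n ≥ 5`, `χ_δ(C_n □ P₃) = 2⌈n/2⌉`. -/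
theorem deltaChrom_cycle_boxProd_path_three (n : ℕ) (hn : 5 ≤ n) :
    deltaChrom (cycleGraph n □ pathGraph 3) = ((2 * ((n + 1) / 2) : ℕ) : ℕ∞) := by
  refine le_antisymm ((myColorable hn).chromaticNumber_le) ?_
  rw [deltaChrom, SimpleGraph.chromaticNumber]
  refine le_iInf fun t => le_iInf fun ht => ?_
  exact_mod_cast myLower hn t ht
end

section
/- For m, n ≥ 3, the δ-chromatic number of the Cartesian product of stars S_{1,m} □ S_{1,n} equals mn. -/
open scoped Classical
open SimpleGraph

/-- The star `S_{1,m}` with one center and `m` leaves. -/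
def starGraphS (m : ℕ) : SimpleGraph (Fin 1 ⊕ Fin m) := completeBipartiteGraph (Fin 1) (Fin m)

lemma star_degree_inl (m : ℕ) (a : Fin 1) :
    (starGraphS m).degree (Sum.inl a) = m := by
  rw [SimpleGraph.degree]
  have : (starGraphS m).neighborFinset (Sum.inl a)
      = Finset.univ.map ⟨Sum.inr, Sum.inr_injective⟩ := by
    ext w
    cases w <;> rw [SimpleGraph.mem_neighborFinset] <;> simp [starGraphS, completeBipartiteGraph, Fin.eq_zero]
  rw [this]; simp

lemma star_degree_inr (m : ℕ) (b : Fin m) :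
    (starGraphS m).degree (Sum.inr b) = 1 := by
  rw [SimpleGraph.degree]
  have : (starGraphS m).neighborFinset (Sum.inr b)
      = Finset.univ.map ⟨Sum.inl, Sum.inl_injective⟩ := by
    ext w
    cases w <;> rw [SimpleGraph.mem_neighborFinset] <;> simp [starGraphS, completeBipartiteGraph, Fin.eq_zero]
  rw [this]; simp

lemma box_degree (m n : ℕ) (a : Fin 1 ⊕ Fin m) (b : Fin 1 ⊕ Fin n)
    {inst : Fintype ((starGraphS m □ starGraphS n).neighborSet (a, b))} :
    @SimpleGraph.degree _ (starGraphS m □ starGraphS n) (a, b) inst =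
      (Sum.elim (fun _ => m) (fun _ => 1) a) + (Sum.elim (fun _ => n) (fun _ => 1) b) := by
  rw [Subsingleton.elim inst (SimpleGraph.neighborSetFintype _ _)]
  rw [SimpleGraph.degree_boxProd]
  cases a <;> cases b <;>
    simp [star_degree_inl, star_degree_inr]

def starCol {m n : ℕ} (hm : 0 < m) (hn : 0 < n) :
    (Fin 1 ⊕ Fin m) × (Fin 1 ⊕ Fin n) → Fin m × Fin n
  | (Sum.inl _, Sum.inl _) => (⟨1 % m, Nat.mod_lt _ hm⟩, ⟨1 % n, Nat.mod_lt _ hn⟩)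
  | (Sum.inl _, Sum.inr j) => (⟨j.val % m, Nat.mod_lt _ hm⟩, ⟨(j.val+1) % n, Nat.mod_lt _ hn⟩)
  | (Sum.inr i, Sum.inl _) => (⟨(i.val+1) % m, Nat.mod_lt _ hm⟩, ⟨i.val % n, Nat.mod_lt _ hn⟩)
  | (Sum.inr i, Sum.inr j) => (i, j)


lemma modcase (a b : ℕ) (h : a < 2 * b) (hb : 0 < b) :
    a % b = a ∧ a < b ∨ a % b = a - b ∧ b ≤ a := by
  rcases Nat.lt_or_ge a b with h' | h'
  · exact Or.inl ⟨Nat.mod_eq_of_lt h', h'⟩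
  · refine Or.inr ⟨?_, h'⟩
    rw [Nat.mod_eq_sub_mod h', Nat.mod_eq_of_lt (by omega)]

lemma star_adj (m : ℕ) (u v : Fin 1 ⊕ Fin m) :
    (starGraphS m).Adj u v ↔ (u.isLeft ∧ v.isRight ∨ u.isRight ∧ v.isLeft) := Iff.rfl

section
variable {m n : ℕ}

lemma starCol_valid (hm : 3 ≤ m) (hn : 3 ≤ n) {u v : (Fin 1 ⊕ Fin m) × (Fin 1 ⊕ Fin n)}
    (h : (deltaComp (starGraphS m □ starGraphS n)).Adj u v) :
    starCol (show 0 < m by omega) (show 0 < n by omega) u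
      ≠ starCol (show 0 < m by omega) (show 0 < n by omega) v := by
  obtain ⟨hne, hd⟩ := h
  obtain ⟨a | i, b | j⟩ := u <;> obtain ⟨a' | i', b' | j'⟩ := v <;>
    simp only [box_degree, SimpleGraph.boxProd_adj, star_adj, Sum.elim_inl, Sum.elim_inr,
      Sum.isLeft_inl, Sum.isRight_inl, Sum.isLeft_inr, Sum.isRight_inr, Sum.inr.injEq,
      Sum.inl.injEq, eq_iff_true_of_subsingleton, true_and, and_true, false_and, and_false,
      false_or, or_false, or_true, true_or, not_true, not_false_iff, ne_eq] at hd <;>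
    simp only [starCol, ne_eq, Prod.mk.injEq, Fin.mk.injEq, Fin.ext_iff, not_and]
  -- 1: LL-LL
  · intro _
    exact hne (by rw [Subsingleton.elim a a', Subsingleton.elim b b'])
  -- 2: LL-LR
  · intro h1 h2
    have hj := j'.isLt
    rw [Nat.mod_eq_of_lt (show 1 < n by omega)] at h2
    obtain ⟨e, l⟩ | ⟨e, l⟩ := modcase (↑j' + 1) n (by omega) (by omega) <;> rw [e] at h2
    · have hj0 : (j' : ℕ) = 0 := by omega
      rw [Nat.mod_eq_of_lt (show 1 < m by omega), hj0, Nat.zero_mod] at h1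
      omega
    · omega
  -- 3: LL-RL
  · intro h1 h2
    have hi := i'.isLt
    rw [Nat.mod_eq_of_lt (show 1 < m by omega)] at h1
    obtain ⟨e, l⟩ | ⟨e, l⟩ := modcase (↑i' + 1) m (by omega) (by omega) <;> rw [e] at h1
    · have hi0 : (i' : ℕ) = 0 := by omega
      rw [Nat.mod_eq_of_lt (show 1 < n by omega), hi0, Nat.zero_mod] at h2
      omega
    · omega
  -- 4: LL-RR
  · exfalso
    rcases hd with ⟨h, -⟩ | ⟨-, hrest⟩
    · omega
    · simp at hrest
  -- 5: LR-LL
  · intro h1 h2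
    have hj := j.isLt
    rw [Nat.mod_eq_of_lt (show 1 < n by omega)] at h2
    obtain ⟨e, l⟩ | ⟨e, l⟩ := modcase (↑j + 1) n (by omega) (by omega) <;> rw [e] at h2
    · have hj0 : (j : ℕ) = 0 := by omega
      rw [Nat.mod_eq_of_lt (show 1 < m by omega), hj0, Nat.zero_mod] at h1
      omega
    · omega
  -- 6: LR-LR
  · intro h1 h2
    have hjj : (j : ℕ) ≠ ↑j' := fun hv => hne (by rw [Subsingleton.elim a a', Fin.ext hv])
    have hj := j.isLt
    have hj' := j'.isLt
    obtain ⟨e1, l1⟩ | ⟨e1, l1⟩ := modcase (↑j + 1) n (by omega) (by omega) <;>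
      obtain ⟨e2, l2⟩ | ⟨e2, l2⟩ := modcase (↑j' + 1) n (by omega) (by omega) <;>
      rw [e1, e2] at h2 <;> omega
  -- 7: LR-RL
  · rcases hd with ⟨hdeg, -⟩ | ⟨-, hrest⟩
    · intro h1 h2
      have hj := j.isLt
      have hi := i'.isLt
      obtain ⟨e1, l1⟩ | ⟨e1, l1⟩ := modcase (↑j) m (by omega) (by omega) <;>
        obtain ⟨e2, l2⟩ | ⟨e2, l2⟩ := modcase (↑i' + 1) m (by omega) (by omega) <;>
        obtain ⟨e3, l3⟩ | ⟨e3, l3⟩ := modcase (↑j + 1) n (by omega) (by omega) <;>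
        obtain ⟨e4, l4⟩ | ⟨e4, l4⟩ := modcase (↑i') n (by omega) (by omega) <;>
        rw [e1, e2] at h1 <;> rw [e3, e4] at h2 <;> omega
    · simp at hrest
  -- 8: LR-RR
  · rcases hd with ⟨hdeg, -⟩ | ⟨-, hrest⟩
    · exfalso; omega
    · simp only [false_or, or_false, reduceCtorEq, false_and, and_false] at hrest
      intro h1 h2
      subst hrest
      have hjlt := j.isLt
      obtain ⟨e, l⟩ | ⟨e, l⟩ := modcase (↑j + 1) n (by omega) (by omega) <;> rw [e] at h2 <;>
        omega
  -- 9: RL-LL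
  · intro h1 h2
    have hi := i.isLt
    rw [Nat.mod_eq_of_lt (show 1 < m by omega)] at h1
    obtain ⟨e, l⟩ | ⟨e, l⟩ := modcase (↑i + 1) m (by omega) (by omega) <;> rw [e] at h1
    · have hi0 : (i : ℕ) = 0 := by omega
      rw [Nat.mod_eq_of_lt (show 1 < n by omega), hi0, Nat.zero_mod] at h2
      omega
    · omega
  -- 10: RL-LR
  · rcases hd with ⟨hdeg, -⟩ | ⟨-, hrest⟩
    · intro h1 h2
      have hi := i.isLt
      have hj := j'.isLt
      obtain ⟨e1, l1⟩ | ⟨e1, l1⟩ := modcase (↑i + 1) m (by omega) (by omega) <;>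
        obtain ⟨e2, l2⟩ | ⟨e2, l2⟩ := modcase (↑j') m (by omega) (by omega) <;>
        obtain ⟨e3, l3⟩ | ⟨e3, l3⟩ := modcase (↑i) n (by omega) (by omega) <;>
        obtain ⟨e4, l4⟩ | ⟨e4, l4⟩ := modcase (↑j' + 1) n (by omega) (by omega) <;>
        rw [e1, e2] at h1 <;> rw [e3, e4] at h2 <;> omega
    · simp at hrest
  -- 11: RL-RL
  · intro h1 h2
    have hii : (i : ℕ) ≠ ↑i' := fun hv => hne (by rw [Subsingleton.elim b b', Fin.ext hv])
    have hi := i.isLt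
    have hi' := i'.isLt
    obtain ⟨e1, l1⟩ | ⟨e1, l1⟩ := modcase (↑i + 1) m (by omega) (by omega) <;>
      obtain ⟨e2, l2⟩ | ⟨e2, l2⟩ := modcase (↑i' + 1) m (by omega) (by omega) <;>
      rw [e1, e2] at h1 <;> omega
  -- 12: RL-RR
  · rcases hd with ⟨hdeg, -⟩ | ⟨-, hrest⟩
    · exfalso; omega
    · simp only [false_or, or_false, reduceCtorEq, false_and, and_false] at hrest
      intro h1 h2
      subst hrest
      have hilt := i.isLt
      obtain ⟨e, l⟩ | ⟨e, l⟩ := modcase (↑i + 1) m (by omega) (by omega) <;> rw [e] at h1 <;>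
        omega
  -- 13: RR-LL
  · exfalso
    rcases hd with ⟨h, -⟩ | ⟨-, hrest⟩
    · omega
    · simp at hrest
  -- 14: RR-LR
  · rcases hd with ⟨hdeg, -⟩ | ⟨-, hrest⟩
    · exfalso; omega
    · simp only [false_or, or_false, reduceCtorEq, false_and, and_false] at hrest
      intro h1 h2
      subst hrest
      have hjlt := j.isLt
      obtain ⟨e, l⟩ | ⟨e, l⟩ := modcase (↑j + 1) n (by omega) (by omega) <;> rw [e] at h2 <;>
        omega
  -- 15: RR-RL
  · rcases hd with ⟨hdeg, -⟩ | ⟨-, hrest⟩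
    · exfalso; omega
    · simp only [false_or, or_false, reduceCtorEq, false_and, and_false] at hrest
      intro h1 h2
      subst hrest
      have hilt := i.isLt
      obtain ⟨e, l⟩ | ⟨e, l⟩ := modcase (↑i + 1) m (by omega) (by omega) <;> rw [e] at h1 <;>
        omega
  -- 16: RR-RR
  · intro h1 h2
    exact hne (by rw [Fin.ext h1, Fin.ext h2])

lemma deltaComp_adj_leafleaf (hm : 3 ≤ m) (hn : 3 ≤ n) (i i' : Fin m) (j j' : Fin n)
    (h : (i, j) ≠ (i', j')) :
    (deltaComp (starGraphS m □ starGraphS n)).Adj (Sum.inr i, Sum.inr j) (Sum.inr i', Sum.inr j') := by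
  refine ⟨fun hh => h ?_, Or.inl ⟨?_, ?_⟩⟩
  · obtain ⟨h1, h2⟩ := Prod.mk.injEq .. ▸ hh
    exact Prod.ext (Sum.inr_injective h1) (Sum.inr_injective h2)
  · rw [box_degree, box_degree]; rfl
  · simp [SimpleGraph.boxProd_adj, star_adj]

end

/-- For `m, n ≥ 3`, `χ_δ(S_{1,m} □ S_{1,n}) = mn`. -/
theorem deltaChrom_star_boxProd_star (m n : ℕ) (hm : 3 ≤ m) (hn : 3 ≤ n) :
    deltaChrom (starGraphS m □ starGraphS n) = ((m * n : ℕ) : ℕ∞) := by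
  have hm0 : 0 < m := by omega
  have hn0 : 0 < n := by omega
  apply le_antisymm
  · have C : (deltaComp (starGraphS m □ starGraphS n)).Coloring (Fin m × Fin n) :=
      SimpleGraph.Coloring.mk (starCol hm0 hn0) (fun hadj => starCol_valid hm hn hadj)
    have h := C.colorable.chromaticNumber_le
    simpa [deltaChrom, Fintype.card_prod] using h
  · let f : (⊤ : SimpleGraph (Fin m × Fin n)) ↪g deltaComp (starGraphS m □ starGraphS n) :=
      { toFun := fun p => (Sum.inr p.1, Sum.inr p.2)
        inj' := by
          intro p q hpq
          obtain ⟨h1, h2⟩ := Prod.mk.injEq .. ▸ hpq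
          exact Prod.ext (Sum.inr_injective h1) (Sum.inr_injective h2)
        map_rel_iff' := by
          intro p q
          rw [SimpleGraph.top_adj]
          constructor
          · intro h hpq
            exact h.1 (by rw [hpq])
          · intro h
            exact deltaComp_adj_leafleaf hm hn p.1 q.1 p.2 q.2 (by simpa using h) }
    have h := SimpleGraph.chromaticNumber_mono_of_hom f.toHom
    rw [SimpleGraph.chromaticNumber_top] at h
    simpa [deltaChrom, Fintype.card_prod] using h
end

section
/- For m, n ≥ 3, the set of pairs of leaves {(i,j) : i a leaf of S_{1,m}, j a leaf of S_{1,n}} forms a clique of size mn in the δ-complement of S_{1,m} □ S_{1,n}. -/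
open scoped Classical
open SimpleGraph

/-- The star `S_{1,m}` with one center and `m` leaves. -/
def starGraph' (m : ℕ) : SimpleGraph (Fin 1 ⊕ Fin m) := completeBipartiteGraph (Fin 1) (Fin m)

lemma starGraph_degree_inr (m : ℕ) (i : Fin m) :
    (completeBipartiteGraph (Fin 1) (Fin m)).degree (Sum.inr i) = 1 := by
  rw [SimpleGraph.degree]
  have : (completeBipartiteGraph (Fin 1) (Fin m)).neighborFinset (Sum.inr i)
      = {Sum.inl 0} := by
    ext u
    cases u with
    | inl a =>
      simp [SimpleGraph.mem_neighborFinset, Subsingleton.elim a 0]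
    | inr b =>
      simp [SimpleGraph.mem_neighborFinset]
  rw [this, Finset.card_singleton]

/-- For `m, n ≥ 3`, the pairs of leaves form a clique of size `mn` in
`(S_{1,m} □ S_{1,n})_δ`. -/
theorem leaves_isClique_deltaComp_star_boxProd_star (m n : ℕ) (hm : 3 ≤ m) (hn : 3 ≤ n) :
    (deltaComp (starGraph' m □ starGraph' n)).IsClique
        {p : (Fin 1 ⊕ Fin m) × (Fin 1 ⊕ Fin n) |
          (∃ i, p.1 = Sum.inr i) ∧ (∃ j, p.2 = Sum.inr j)} ∧
      ({p : (Fin 1 ⊕ Fin m) × (Fin 1 ⊕ Fin n) |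
          (∃ i, p.1 = Sum.inr i) ∧ (∃ j, p.2 = Sum.inr j)}).ncard = m * n := by
  have hdeg : ∀ (i : Fin m) (j : Fin n)
      (inst : Fintype ((starGraph' m □ starGraph' n).neighborSet (Sum.inr i, Sum.inr j))),
      @SimpleGraph.degree _ (starGraph' m □ starGraph' n) (Sum.inr i, Sum.inr j) inst = 2 := by
    intro i j inst
    have h2 : (starGraph' m □ starGraph' n).degree (Sum.inr i, Sum.inr j) = 2 := by
      rw [SimpleGraph.degree_boxProd]
      simp [starGraph', starGraph_degree_inr]
      convert congrArg₂ (· + ·) (starGraph_degree_inr m i) (starGraph_degree_inr n j) <;>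
        (unfold SimpleGraph.degree; congr 1)
    convert h2 using 2
  constructor
  · rintro ⟨a, b⟩ ⟨⟨i, hi⟩, ⟨j, hj⟩⟩ ⟨c, d⟩ ⟨⟨i', hi'⟩, ⟨j', hj'⟩⟩ hne
    subst hi hj hi' hj'
    refine ⟨hne, Or.inl ⟨by rw [hdeg i j _, hdeg i' j' _], ?_⟩⟩
    rw [SimpleGraph.boxProd_adj]
    simp [starGraph']
  · have hset : {p : (Fin 1 ⊕ Fin m) × (Fin 1 ⊕ Fin n) |
          (∃ i, p.1 = Sum.inr i) ∧ (∃ j, p.2 = Sum.inr j)}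
        = Set.range (fun p : Fin m × Fin n => ((Sum.inr p.1, Sum.inr p.2) :
            (Fin 1 ⊕ Fin m) × (Fin 1 ⊕ Fin n))) := by
      ext ⟨a, b⟩
      simp only [Set.mem_setOf_eq, Set.mem_range, Prod.mk.injEq, Prod.exists]
      constructor
      · rintro ⟨⟨i, rfl⟩, ⟨j, rfl⟩⟩; exact ⟨i, j, rfl, rfl⟩
      · rintro ⟨i, j, rfl, rfl⟩; exact ⟨⟨i, rfl⟩, ⟨j, rfl⟩⟩
    rw [hset, ← Nat.card_coe_set_eq, Nat.card_range_of_injective]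
    · simp [Nat.card_eq_fintype_card]
    · intro p q h
      simp only [Prod.mk.injEq, Sum.inr.injEq] at h
      exact Prod.ext h.1 h.2
end
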